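/- Let A, c ∈ ℂ with A ≠ 0 and Re(c) ≠ 0, and let s = 1 if Re(c) > 0 and s = −1 if Re(c) < 0. Then there exist α, β, γ, δ ∈ ℝ with αδ + βγ = 1 and δ + iγc ≠ 0 such that (αc + iβ)/(δ + iγc) = s and A·(δ + iγc)⁴ = −|A|·(Re c)². -/

import Mathlib

open Complex

/-- **Canonical form of the orbits with `Re c ≠ 0`:** for `A ≠ 0` and `Re c ≠ 0`,
with `s = sign(Re c)`, there is an Ehlers group element `(α, β, γ, δ)`,
`αδ + βγ = 1`, `δ + iγc ≠ 0`, with `(αc + iβ)/(δ + iγc) = s` and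
`A(δ + iγc)⁴ = −|A| (Re c)²`. -/
theorem ehlers_orbit_canonical_form_re_ne_zero (A c : ℂ) (hA : A ≠ 0)
    (hc : c.re ≠ 0) :
    ∃ α β γ δ : ℝ, α * δ + β * γ = 1 ∧ (δ : ℂ) + I * γ * c ≠ 0
      ∧ (α * c + I * β) / ((δ : ℂ) + I * γ * c)
          = (if 0 < c.re then (1 : ℂ) else -1)
      ∧ A * ((δ : ℂ) + I * γ * c) ^ 4
          = -((‖A‖ : ℝ) : ℂ) * ((c.re : ℝ) : ℂ) ^ 2 := by
  set s : ℝ := if 0 < c.re then 1 else -1 with hs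
  have hsre : s * |c.re| = c.re := by
    rcases lt_or_gt_of_ne hc with h | h
    · simp [hs, not_lt.mpr h.le, abs_of_neg h]
    · simp [hs, h, abs_of_pos h]
  have huz : (-((‖A‖ : ℝ) : ℂ) * ((c.re : ℝ) : ℂ) ^ 2) / A ≠ 0 := by
    apply div_ne_zero _ hA
    simp [hA, hc]
  obtain ⟨w, hw⟩ := IsAlgClosed.exists_pow_nat_eq
    ((-((‖A‖ : ℝ) : ℂ) * ((c.re : ℝ) : ℂ) ^ 2) / A) (by norm_num : 0 < 4)
  have hwz : w ≠ 0 := fun h => huz (by rw [← hw, h]; ring)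
  have habs : ‖w‖ ^ 4 = c.re ^ 2 := by
    have h := congrArg norm hw
    rw [norm_pow] at h
    rw [h, norm_div, norm_mul, norm_neg, norm_real, Real.norm_eq_abs, norm_pow, norm_real,
      Real.norm_eq_abs, _root_.abs_of_nonneg (norm_nonneg A), _root_.sq_abs]
    exact mul_div_cancel_left₀ _ (norm_ne_zero_iff.mpr hA)
  have hns : Complex.normSq w = |c.re| := by
    have h1 : (Complex.normSq w) ^ 2 = |c.re| ^ 2 := by
      rw [← Complex.sq_norm, ← pow_mul, _root_.sq_abs]
      norm_num [habs]
    have := congrArg Real.sqrt h1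
    rwa [Real.sqrt_sq (Complex.normSq_nonneg w), Real.sqrt_sq (abs_nonneg _)] at this
  have hns' : w.re ^ 2 + w.im ^ 2 = |c.re| := by
    rw [← hns, Complex.normSq_apply]; ring
  refine ⟨s * w.re / c.re, s * w.im - (s * w.re / c.re) * c.im,
    w.im / c.re, w.re + (w.im / c.re) * c.im, ?_, ?_, ?_, ?_⟩
  · field_simp
    linear_combination s * c.re * hns' + c.re * hsre
  all_goals {
    have hwd : ((w.re + (w.im / c.re) * c.im : ℝ) : ℂ) + I * (w.im / c.re : ℝ) * c = w := by
      apply Complex.ext <;> simp [Complex.add_re, Complex.add_im, Complex.mul_re,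
        Complex.mul_im] <;> field_simp
    rw [hwd]
    first
    | exact hwz
    | (rw [hw]; field_simp; try ring)
    | (have hnum : ((s * w.re / c.re : ℝ) : ℂ) * c + I * ((s * w.im - (s * w.re / c.re) * c.im : ℝ) : ℂ) = (s : ℂ) * w := by
        apply Complex.ext <;> simp [Complex.add_re, Complex.add_im, Complex.mul_re,
          Complex.mul_im] <;> field_simp <;> ring
       rw [hnum, mul_div_assoc, div_self hwz, mul_one]
       split_ifs with h <;> simp [hs, h])
  }
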